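/- Lovász extension increment at a new bottom level: let f be a nonnegative monotone submodular set function on subsets of a finite set L, let y ∈ [0,1]^L, let S = {u ∈ L : y_u > 0}, let W ⊆ L \ S, and let c ∈ [0,1] satisfy c ≤ y_u for every u ∈ S. Define y' by y'_w = c for w ∈ W and y'_u = y_u for u ∉ W. Then f̂(y') = f̂(y) + c·(f(S ∪ W) − f(S)). -/

import Mathlib

open Finset

/-- The Lovász extension of a set function `f` on subsets of a finite type `L`:
`f̂(y) = ∫₀¹ f({u : y u ≥ t}) dt`. -/
noncomputable def lovasz {L : Type*} [Fintype L] (f : Finset L → ℝ) (y : L → ℝ) : ℝ :=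
  ∫ t in (0:ℝ)..1, f (Finset.univ.filter fun u => t ≤ y u)

/-- Lovász extension increment at a new bottom level: let `S = {u : y u > 0}`,
`W ⊆ L \ S`, and `c ∈ [0,1]` with `c ≤ y u` for all `u ∈ S`. Raising the coordinates of
`W` to `c` increases the Lovász extension by exactly `c · (f(S ∪ W) - f(S))`. -/
theorem stmt13 {L : Type*} [Fintype L] [DecidableEq L] (f : Finset L → ℝ)
    (hf_nonneg : ∀ S : Finset L, 0 ≤ f S)
    (hf_mono : ∀ A B : Finset L, A ⊆ B → f A ≤ f B)
    (hf_submod : ∀ A B : Finset L, f (A ∪ B) + f (A ∩ B) ≤ f A + f B)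
    (y : L → ℝ) (hy : ∀ u, y u ∈ Set.Icc (0:ℝ) 1)
    (S : Finset L) (hS : S = Finset.univ.filter fun u => 0 < y u)
    (W : Finset L) (hW : W ⊆ Finset.univ \ S)
    (c : ℝ) (hc : c ∈ Set.Icc (0:ℝ) 1) (hcS : ∀ u ∈ S, c ≤ y u)
    (y' : L → ℝ) (hy' : ∀ u, y' u = if u ∈ W then c else y u) :
    lovasz f y' = lovasz f y + c * (f (S ∪ W) - f S) := by
  obtain ⟨hc0, hc1⟩ := hc
  set g : ℝ → ℝ := fun t => f (Finset.univ.filter fun u => t ≤ y u) with hg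
  set g' : ℝ → ℝ := fun t => f (Finset.univ.filter fun u => t ≤ y' u) with hg'
  have hanti : Antitone g := by
    intro s t hst
    exact hf_mono _ _ (Finset.monotone_filter_right _ (fun u _ htu => le_trans hst htu))
  have hanti' : Antitone g' := by
    intro s t hst
    exact hf_mono _ _ (Finset.monotone_filter_right _ (fun u _ htu => le_trans hst htu))
  -- W members have y u ≤ 0 and are not in S
  have hWy : ∀ u ∈ W, y u ≤ 0 ∧ u ∉ S := by
    intro u hu
    have := hW hu
    rw [Finset.mem_sdiff] at this
    refine ⟨?_, this.2⟩
    by_contra h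
    exact this.2 (hS ▸ Finset.mem_filter.mpr ⟨Finset.mem_univ _, lt_of_not_ge h⟩)
  -- level set of y on (0, c] is S
  have hlevS : ∀ t ∈ Set.Ioc (0:ℝ) c, (Finset.univ.filter fun u => t ≤ y u) = S := by
    intro t ⟨ht0, htc⟩
    ext u
    simp only [Finset.mem_filter, Finset.mem_univ, true_and]
    constructor
    · intro h
      rw [hS]; exact Finset.mem_filter.mpr ⟨Finset.mem_univ _, lt_of_lt_of_le ht0 h⟩
    · intro h
      exact le_trans htc (hcS u h)
  -- level set of y' on (0, c] is S ∪ W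
  have hlevSW : ∀ t ∈ Set.Ioc (0:ℝ) c,
      (Finset.univ.filter fun u => t ≤ y' u) = S ∪ W := by
    intro t ht
    obtain ⟨ht0, htc⟩ := ht
    ext u
    simp only [Finset.mem_filter, Finset.mem_univ, true_and, Finset.mem_union, hy' u]
    by_cases hu : u ∈ W
    · simp [hu, htc]
    · simp only [hu, if_false, or_false]
      have := hlevS t ⟨ht0, htc⟩
      constructor
      · intro h
        have : u ∈ (Finset.univ.filter fun u => t ≤ y u) :=
          Finset.mem_filter.mpr ⟨Finset.mem_univ _, h⟩
        rwa [hlevS t ⟨ht0, htc⟩] at this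
      · intro h
        have : u ∈ (Finset.univ.filter fun u => t ≤ y u) := by
          rw [hlevS t ⟨ht0, htc⟩]; exact h
        exact (Finset.mem_filter.mp this).2
  -- level sets agree for t > c
  have hleveq : ∀ t ∈ Set.Ioc c (1:ℝ),
      (Finset.univ.filter fun u => t ≤ y' u) = Finset.univ.filter fun u => t ≤ y u := by
    intro t ⟨htc, _⟩
    ext u
    simp only [Finset.mem_filter, Finset.mem_univ, true_and, hy' u]
    by_cases hu : u ∈ W
    · simp only [hu, if_true]
      have hy0 := (hWy u hu).1
      constructor
      · intro h; exact absurd h (not_le.mpr htc)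
      · intro h; exact absurd h (not_le.mpr (lt_of_le_of_lt hy0 (lt_of_le_of_lt hc0 htc)))
    · simp [hu]
  have hi1 : IntervalIntegrable g' MeasureTheory.volume 0 c := hanti'.intervalIntegrable
  have hi2 : IntervalIntegrable g' MeasureTheory.volume c 1 := hanti'.intervalIntegrable
  have hi3 : IntervalIntegrable g MeasureTheory.volume 0 c := hanti.intervalIntegrable
  have hi4 : IntervalIntegrable g MeasureTheory.volume c 1 := hanti.intervalIntegrable
  have hsplit' : lovasz f y' = (∫ t in (0:ℝ)..c, g' t) + ∫ t in c..(1:ℝ), g' t := by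
    rw [lovasz, intervalIntegral.integral_add_adjacent_intervals hi1 hi2]
  have hsplit : lovasz f y = (∫ t in (0:ℝ)..c, g t) + ∫ t in c..(1:ℝ), g t := by
    rw [lovasz, intervalIntegral.integral_add_adjacent_intervals hi3 hi4]
  have h1 : (∫ t in (0:ℝ)..c, g' t) = c * f (S ∪ W) := by
    rw [intervalIntegral.integral_congr_ae (g := fun _ => f (S ∪ W)) ?_,
      intervalIntegral.integral_const]
    · rw [sub_zero, smul_eq_mul]
    · filter_upwards with t ht
      rw [Set.uIoc_of_le hc0] at ht
      show g' t = _
      rw [hg']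
      simp only
      rw [hlevSW t ht]
  have h2 : (∫ t in (0:ℝ)..c, g t) = c * f S := by
    rw [intervalIntegral.integral_congr_ae (g := fun _ => f S) ?_,
      intervalIntegral.integral_const]
    · rw [sub_zero, smul_eq_mul]
    · filter_upwards with t ht
      rw [Set.uIoc_of_le hc0] at ht
      show g t = _
      rw [hg]
      simp only
      rw [hlevS t ht]
  have h3 : (∫ t in c..(1:ℝ), g' t) = ∫ t in c..(1:ℝ), g t := by
    apply intervalIntegral.integral_congr_ae
    filter_upwards with t ht
    rw [Set.uIoc_of_le hc1] at ht
    show g' t = g t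
    rw [hg, hg']
    simp only
    rw [hleveq t ht]
  rw [hsplit', hsplit, h1, h2, h3]
  ring
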